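/- arXiv:0802.1943 — 3 statements merged into one kernel-verified Lean document; each statement's English description precedes it below -/
import Mathlib

section
/- Let C and D be crossingless matchings on {1,…,n}. The set of minimal elements of the equivalence classes of ≈_{C,D} on {0,1,…,n} consists of 0 together with exactly the leftmost vertex of each circle and the leftmost vertex of each line of the glued diagram D̄C. -/
open Module

namespace Springer

/-- The nilpotent endomorphism `N` of `ℂ^n` with two Jordan blocks of sizes `n-k` and `k`:
the basis vectors `e 0, …, e (n-k-1)` are `p 1, …, p (n-k)` and
`e (n-k), …, e (n-1)` are `q 1, …, q k`; `N` shifts each block down by one. -/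
def Nmap (n k : ℕ) : (Fin n → ℂ) →ₗ[ℂ] (Fin n → ℂ) where
  toFun x j := if h : j.val + 1 < n ∧ j.val + 1 ≠ n - k then x ⟨j.val + 1, h.1⟩ else 0
  map_add' x y := by
    funext j
    by_cases h : j.val + 1 < n ∧ j.val + 1 ≠ n - k <;> simp [h]
  map_smul' c x := by
    funext j
    by_cases h : j.val + 1 < n ∧ j.val + 1 ≠ n - k <;> simp [h]

/-- `span (p 1, …, p t, q 1, …, q b)` inside `ℂ^n`. -/
noncomputable def spanPQ (n k t b : ℕ) : Submodule ℂ (Fin n → ℂ) :=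
  Submodule.span ℂ {x | ∃ j : Fin n,
    ((j.val < t ∧ j.val < n - k) ∨ (n - k ≤ j.val ∧ j.val < n - k + b)) ∧ x = Pi.single j 1}

/-- `P = span (p 1, …, p (n-k))`. -/
noncomputable def Pmod (n k : ℕ) : Submodule ℂ (Fin n → ℂ) := spanPQ n k (n - k) 0

/-- `Q = span (q 1, …, q k)`. -/
noncomputable def Qmod (n k : ℕ) : Submodule ℂ (Fin n → ℂ) := spanPQ n k 0 k

/-- The projection of `V` onto `Q` along `P`. -/
def projQ (n k : ℕ) : (Fin n → ℂ) →ₗ[ℂ] (Fin n → ℂ) where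
  toFun x j := if n - k ≤ j.val then x j else 0
  map_add' x y := by
    funext j
    by_cases h : n - k ≤ j.val
    · simp only [Pi.add_apply, if_pos h]
    · simp only [Pi.add_apply, if_neg h, add_zero]
  map_smul' c x := by
    funext j
    by_cases h : n - k ≤ j.val
    · simp only [Pi.smul_apply, smul_eq_mul, if_pos h, RingHom.id_apply]
    · simp only [Pi.smul_apply, smul_eq_mul, if_neg h, mul_zero, RingHom.id_apply]

/-- A complete `N`-invariant flag in `ℂ^n`: a chain `F 0 ⊆ ⋯ ⊆ F n` with `dim F i = i`
(thus `F 0 = 0` and `F n = V`) and `N (F (i+1)) ⊆ F i`. -/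
def IsNFlag (n k : ℕ) (F : Fin (n + 1) → Submodule ℂ (Fin n → ℂ)) : Prop :=
  Monotone F ∧ (∀ i : Fin (n + 1), finrank ℂ (F i) = i.val) ∧
    ∀ i : Fin n, Submodule.map (Nmap n k) (F i.succ) ≤ F i.castSucc

/-- A flag is torus fixed if each subspace is spanned by its intersections with `P` and `Q`. -/
def TorusFixed (n k : ℕ) (F : Fin (n + 1) → Submodule ℂ (Fin n → ℂ)) : Prop :=
  ∀ i, F i = (F i ⊓ Pmod n k) ⊔ (F i ⊓ Qmod n k)

/-- A weight sequence (row-strict tableau) of shape `(n-k, k)`: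
`true` encodes `∨` and `false` encodes `∧`; there are exactly `k` symbols `∨`. -/
def IsWeightSeq (n k : ℕ) (w : Fin n → Bool) : Prop :=
  (Finset.univ.filter fun i => w i = true).card = k

/-- `t i` = number of 1-based positions `≤ i` labelled `∧`. -/
def tcount (n : ℕ) (w : Fin n → Bool) (i : ℕ) : ℕ :=
  (Finset.univ.filter fun j : Fin n => j.val < i ∧ w j = false).card

/-- `b i` = number of 1-based positions `≤ i` labelled `∨`. -/
def bcount (n : ℕ) (w : Fin n → Bool) (i : ℕ) : ℕ :=
  (Finset.univ.filter fun j : Fin n => j.val < i ∧ w j = true).card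

/-- The torus fixed flag `Φ(w)` attached to a weight sequence `w`:
`Φ(w) i = span (p 1, …, p (t i), q 1, …, q (b i))`. -/
noncomputable def PhiFlag (n k : ℕ) (w : Fin n → Bool) : Fin (n + 1) → Submodule ℂ (Fin n → ℂ) :=
  fun i => spanPQ n k (tcount n w i.val) (bcount n w i.val)

/-- A crossingless matching on the points `1, …, n`: a set of cups `(i, j)` with
`1 ≤ i < j ≤ n`, pairwise disjoint, mutually non-crossing, and such that no unmatched
point (ray) lies strictly inside any cup. -/
structure CrossinglessMatching (n : ℕ) where
  cups : Finset (ℕ × ℕ)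
  mem_range : ∀ p ∈ cups, 1 ≤ p.1 ∧ p.1 < p.2 ∧ p.2 ≤ n
  disjoint' : ∀ p ∈ cups, ∀ q ∈ cups, p ≠ q →
    p.1 ≠ q.1 ∧ p.1 ≠ q.2 ∧ p.2 ≠ q.1 ∧ p.2 ≠ q.2
  noncross : ∀ p ∈ cups, ∀ q ∈ cups, ¬(p.1 < q.1 ∧ q.1 < p.2 ∧ p.2 < q.2)
  rays_outside : ∀ p ∈ cups, ∀ m : ℕ, p.1 < m → m < p.2 → ∃ q ∈ cups, m = q.1 ∨ m = q.2

/-- The point `m ∈ {1, …, n}` is matched (lies on a cup) in `C`. -/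
def Matched (n : ℕ) (C : CrossinglessMatching n) (m : ℕ) : Prop :=
  ∃ p ∈ C.cups, m = p.1 ∨ m = p.2

/-- A standard tableau of shape `(n-k, k)`: a filling of the two-row Young diagram by
the numbers `1, …, n`, each used exactly once, with rows and columns strictly
decreasing read from the top left. -/
structure StandardTableau (n k : ℕ) where
  top : Fin (n - k) → ℕ
  bot : Fin k → ℕ
  top_strict : ∀ i j : Fin (n - k), i < j → top j < top i
  bot_strict : ∀ i j : Fin k, i < j → bot j < bot i
  col_strict : ∀ (i : Fin (n - k)) (j : Fin k), i.val = j.val → bot j < top i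
  mem_iff : ∀ m : ℕ, (1 ≤ m ∧ m ≤ n) ↔ ((∃ i, top i = m) ∨ (∃ j, bot j = m))
  top_ne_bot : ∀ (i : Fin (n - k)) (j : Fin k), top i ≠ bot j

/-- `C` is the crossingless matching `m(S)` associated with the standard tableau `S`:
it has `k` cups and its left cup endpoints are exactly the bottom-row entries of `S`. -/
def IsMatchOf (n k : ℕ) (S : StandardTableau n k) (C : CrossinglessMatching n) : Prop :=
  C.cups.card = k ∧ ∀ m : ℕ, (∃ p ∈ C.cups, p.1 = m) ↔ ∃ j, S.bot j = m

/-- The weight sequence of a standard tableau: `∨` (i.e. `true`) exactly on the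
bottom-row entries. -/
def tabWeight (n k : ℕ) (S : StandardTableau n k) : Fin n → Bool :=
  fun j => decide (∃ i, S.bot i = j.val + 1)

/-- The cup conditions cutting out `Y_S`: for every cup `(i, σ i)` of the matching,
`N ^ δ i (F (σ i)) = F (i - 1)` where `δ i = (σ i - i + 1)/2`. -/
def CupCond (n k : ℕ) (C : CrossinglessMatching n)
    (F : Fin (n + 1) → Submodule ℂ (Fin n → ℂ)) : Prop :=
  ∀ p ∈ C.cups, ∀ (h1 : p.1 - 1 < n + 1) (h2 : p.2 < n + 1),
    Submodule.map ((Nmap n k) ^ ((p.2 - p.1 + 1) / 2)) (F ⟨p.2, h2⟩) = F ⟨p.1 - 1, h1⟩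

/-- The ray conditions cutting out `Y_S` (for the weight sequence of `S`): for every
ray `m` of the matching, `F m = (N ^ b m)⁻¹ (range (N ^ (n - k - t m + b m)))`. -/
def RayCond (n k : ℕ) (w : Fin n → Bool) (C : CrossinglessMatching n)
    (F : Fin (n + 1) → Submodule ℂ (Fin n → ℂ)) : Prop :=
  ∀ m : ℕ, 1 ≤ m → ∀ hm : m < n + 1, ¬ Matched n C m →
    F ⟨m, hm⟩ = Submodule.comap ((Nmap n k) ^ (bcount n w m))
      (LinearMap.range ((Nmap n k) ^ (n - k - tcount n w m + bcount n w m)))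

/-- Membership in the (Spaltenstein–Vargas–Fung) component `Y_S`, where `C = m(S)`. -/
def InYS (n k : ℕ) (S : StandardTableau n k) (C : CrossinglessMatching n)
    (F : Fin (n + 1) → Submodule ℂ (Fin n → ℂ)) : Prop :=
  IsNFlag n k F ∧ CupCond n k C F ∧ RayCond n k (tabWeight n k S) C F

/-- The weight sequence `v` orients the crossingless matching `C`: opposite labels at
the two endpoints of every cup, and `∧` at every ray. -/
def OrientsMatching (n : ℕ) (v : Fin n → Bool) (C : CrossinglessMatching n) : Prop :=
  (∀ p ∈ C.cups, ∀ (h1 : p.1 - 1 < n) (h2 : p.2 - 1 < n),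
      v ⟨p.1 - 1, h1⟩ ≠ v ⟨p.2 - 1, h2⟩) ∧
  (∀ m : ℕ, 1 ≤ m → m ≤ n → ¬ Matched n C m → ∀ h : m - 1 < n, v ⟨m - 1, h⟩ = false)

/-- `C` is the matching `m(w)` produced from the weight sequence `w` by repeatedly
joining a pair `i < j` with `w i = ∨`, `w j = ∧` and all points strictly between them
already matched, until no such pair remains. -/
def IsMw (n : ℕ) (w : Fin n → Bool) (C : CrossinglessMatching n) : Prop :=
  (∀ p ∈ C.cups, ∀ (h1 : p.1 - 1 < n) (h2 : p.2 - 1 < n),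
      w ⟨p.1 - 1, h1⟩ = true ∧ w ⟨p.2 - 1, h2⟩ = false) ∧
  ¬ ∃ i j : ℕ, 1 ≤ i ∧ i < j ∧ j ≤ n ∧ ¬ Matched n C i ∧ ¬ Matched n C j ∧
      (∀ h : i - 1 < n, w ⟨i - 1, h⟩ = true) ∧ (∀ h : j - 1 < n, w ⟨j - 1, h⟩ = false) ∧
      (∀ m : ℕ, i < m → m < j → Matched n C m)

/-- `Cw` is the completed matching `C(w)`: a crossingless matching with `k` cups
containing `m(w) = Cm` on whose every cup `w` puts opposite labels. -/
def IsCw (n k : ℕ) (w : Fin n → Bool) (Cm Cw : CrossinglessMatching n) : Prop :=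
  Cm.cups ⊆ Cw.cups ∧ Cw.cups.card = k ∧
  ∀ p ∈ Cw.cups, ∀ (h1 : p.1 - 1 < n) (h2 : p.2 - 1 < n),
    w ⟨p.1 - 1, h1⟩ ≠ w ⟨p.2 - 1, h2⟩

/-- Membership in the closed attracting set `St(w)`, where `S = S(w)` and `Cw = C(w)`:
a flag of `Y_{S(w)}` such that `F i = Φ(w) i` for every `i` with `w i = ∧` which is a
left cup endpoint of `C(w)`. -/
def InSt (n k : ℕ) (w : Fin n → Bool) (S : StandardTableau n k)
    (Cw : CrossinglessMatching n) (F : Fin (n + 1) → Submodule ℂ (Fin n → ℂ)) : Prop :=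
  InYS n k S Cw F ∧
  ∀ i : ℕ, ∀ hi : i < n + 1, (∀ h : i - 1 < n, w ⟨i - 1, h⟩ = false) →
    (∃ p ∈ Cw.cups, p.1 = i) → F ⟨i, hi⟩ = PhiFlag n k w ⟨i, hi⟩

/-- The generating relation of `∼_C`: `a ∼ σ(a+1)` whenever `a+1` is a left cup
endpoint of `C`. -/
def cupRel (n : ℕ) (C : CrossinglessMatching n) (a b : ℕ) : Prop :=
  ∃ p ∈ C.cups, p.1 = a + 1 ∧ p.2 = b

/-- The equivalence relation `∼_C` on `{0, 1, …, n}`. -/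
def simRel (n : ℕ) (C : CrossinglessMatching n) : ℕ → ℕ → Prop :=
  Relation.EqvGen (cupRel n C)

/-- The equivalence relation `≈_{C,D}` on `{0, 1, …, n}` generated by `∼_C` and `∼_D`. -/
def approxRel (n : ℕ) (C D : CrossinglessMatching n) : ℕ → ℕ → Prop :=
  Relation.EqvGen (fun a b => cupRel n C a b ∨ cupRel n D a b)

/-- Adjacency in the glued diagram `D̄C`: `i` and `j` are joined by a cup of `C` or of `D`. -/
def Adj (n : ℕ) (C D : CrossinglessMatching n) (i j : ℕ) : Prop :=
  (i, j) ∈ C.cups ∨ (j, i) ∈ C.cups ∨ (i, j) ∈ D.cups ∨ (j, i) ∈ D.cups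

/-- Lying in the same connected component of the glued diagram `D̄C`. -/
def Conn (n : ℕ) (C D : CrossinglessMatching n) : ℕ → ℕ → Prop :=
  Relation.EqvGen (Adj n C D)

/-- The component of `v` in the glued diagram is a circle: every vertex of the
component is matched both in `C` and in `D`. -/
def IsCircleComp (n : ℕ) (C D : CrossinglessMatching n) (v : ℕ) : Prop :=
  ∀ u, Conn n C D u v → Matched n C u ∧ Matched n D u

/-- `v` is the leftmost vertex of its connected component (circle or line) of the
glued diagram. -/
def IsLeftmost (n : ℕ) (C D : CrossinglessMatching n) (v : ℕ) : Prop :=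
  1 ≤ v ∧ v ≤ n ∧ ∀ u, 1 ≤ u → Conn n C D u v → v ≤ u

/-- An orientation of the glued diagram `D̄C` (with `C = m(w)` and `D = m(w')`):
a weight sequence assigning opposite labels to the endpoints of every cup of `C` and
of `D`, agreeing with `w` at every ray of `C` and with `w'` at every ray of `D`. -/
def OrientsGlued (n k : ℕ) (w w' : Fin n → Bool) (C D : CrossinglessMatching n)
    (v : Fin n → Bool) : Prop :=
  IsWeightSeq n k v ∧
  (∀ p ∈ C.cups, ∀ (h1 : p.1 - 1 < n) (h2 : p.2 - 1 < n),
      v ⟨p.1 - 1, h1⟩ ≠ v ⟨p.2 - 1, h2⟩) ∧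
  (∀ p ∈ D.cups, ∀ (h1 : p.1 - 1 < n) (h2 : p.2 - 1 < n),
      v ⟨p.1 - 1, h1⟩ ≠ v ⟨p.2 - 1, h2⟩) ∧
  (∀ i : Fin n, ¬ Matched n C (i.val + 1) → v i = w i) ∧
  (∀ i : Fin n, ¬ Matched n D (i.val + 1) → v i = w' i)

/-- The component of `v0` in the glued diagram is orientable: it admits a labeling of
its vertices by `∧, ∨`, opposite across every edge, agreeing with `w` at every vertex
which is a ray of `C` and with `w'` at every vertex which is a ray of `D`. -/
def ComponentOrientable (n : ℕ) (w w' : Fin n → Bool) (C D : CrossinglessMatching n)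
    (v0 : ℕ) : Prop :=
  ∃ g : ℕ → Bool,
    (∀ i j, Conn n C D i v0 → Adj n C D i j → g i ≠ g j) ∧
    (∀ i, Conn n C D i v0 → 1 ≤ i → i ≤ n → ¬ Matched n C i →
      ∀ h : i - 1 < n, g i = w ⟨i - 1, h⟩) ∧
    (∀ i, Conn n C D i v0 → 1 ≤ i → i ≤ n → ¬ Matched n D i →
      ∀ h : i - 1 < n, g i = w' ⟨i - 1, h⟩)

/-- A walk in the glued multigraph `D̄C` from `a` to `b`: a list of edges, each tagged
by `true` (an edge of `C`) or `false` (an edge of `D`), consecutively incident. -/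
def IsGluedWalk (n : ℕ) (C D : CrossinglessMatching n) : ℕ → ℕ → List (Bool × ℕ × ℕ) → Prop
  | a, b, [] => a = b
  | a, b, e :: es =>
      (if e.1 = true then (e.2.1, e.2.2) ∈ C.cups else (e.2.1, e.2.2) ∈ D.cups) ∧
      ((a = e.2.1 ∧ IsGluedWalk n C D e.2.2 b es) ∨ (a = e.2.2 ∧ IsGluedWalk n C D e.2.1 b es))

/-- The standard flag of `ℂ^n`. -/
noncomputable def stdFlag (n k : ℕ) : Fin (n + 1) → Submodule ℂ (Fin n → ℂ) :=
  fun i => spanPQ n k (min i.val (n - k)) (i.val - (n - k))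


open scoped Classical

/-! ### Auxiliary lemmas for `minimal_representatives` -/

/-- Bounds of a cup. -/
lemma cup_range {n : ℕ} (E : CrossinglessMatching n) {i j : ℕ} (h : (i, j) ∈ E.cups) :
    1 ≤ i ∧ i < j ∧ j ≤ n := E.mem_range (i, j) h

/-- A point strictly inside a cup is matched by a cup nested strictly inside it. -/
lemma partner_inside {n : ℕ} (E : CrossinglessMatching n) {i j p : ℕ}
    (hij : (i, j) ∈ E.cups) (h1 : i < p) (h2 : p < j) :
    ∃ q ∈ E.cups, (p = q.1 ∨ p = q.2) ∧ i < q.1 ∧ q.2 < j := by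
  obtain ⟨q, hq, hpq⟩ := E.rays_outside (i, j) hij p h1 h2
  have hr := E.mem_range q hq
  have hij' := cup_range E hij
  have hne : (i, j) ≠ q := by
    rintro rfl
    dsimp only at hpq
    rcases hpq with h | h <;> omega
  obtain ⟨d1, d2, d3, d4⟩ := E.disjoint' (i, j) hij q hq hne
  dsimp only at d1 d2 d3 d4
  refine ⟨q, hq, hpq, ?_, ?_⟩
  · by_contra hle
    push_neg at hle
    have hp2 : p = q.2 := by rcases hpq with h | h <;> omega
    have := E.noncross q hq (i, j) hij
    dsimp only at this
    exact this ⟨by omega, by omega, by omega⟩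
  · by_contra hle
    push_neg at hle
    have hp1 : p = q.1 := by rcases hpq with h | h <;> omega
    have := E.noncross (i, j) hij q hq
    dsimp only at this
    exact this ⟨by omega, by omega, by omega⟩

/-- Tiling lemma: if every point of `(a, b]` is matched by a cup inside `(a, b]`,
then the gaps `a` and `b` are `∼`-equivalent. -/
lemma tile {n : ℕ} (E : CrossinglessMatching n) :
    ∀ d a b, b - a = d → a ≤ b →
      (∀ p, a < p → p ≤ b → ∃ q ∈ E.cups, (p = q.1 ∨ p = q.2) ∧ a < q.1 ∧ q.2 ≤ b) →
      Relation.EqvGen (cupRel n E) a b := by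
  intro d
  induction d using Nat.strong_induction_on with
  | _ d ih =>
    intro a b hd hab hyp
    rcases Nat.eq_or_lt_of_le hab with rfl | hlt
    · exact Relation.EqvGen.refl a
    · obtain ⟨q, hq, hpq, hq1, hq2⟩ := hyp (a + 1) (Nat.lt_succ_self a) hlt
      have hr := E.mem_range q hq
      have hq1' : q.1 = a + 1 := by rcases hpq with h | h <;> omega
      have hstep : Relation.EqvGen (cupRel n E) a q.2 :=
        Relation.EqvGen.rel _ _ ⟨q, hq, hq1', rfl⟩
      have hrec : Relation.EqvGen (cupRel n E) q.2 b := by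
        refine ih (b - q.2) (by omega) q.2 b rfl (by omega) ?_
        intro p hp1 hp2
        obtain ⟨q', hq', hpq', ha', hb'⟩ := hyp p (by omega) hp2
        refine ⟨q', hq', hpq', ?_, hb'⟩
        have hr' := E.mem_range q' hq'
        have hqq' : q ≠ q' := by
          rintro rfl
          rcases hpq' with h | h <;> omega
        obtain ⟨d1, d2, d3, d4⟩ := E.disjoint' q hq q' hq' hqq'
        by_contra hle
        push_neg at hle
        have hp2' : p = q'.2 := by rcases hpq' with h | h <;> omega
        exact E.noncross q hq q' hq' ⟨by omega, by omega, by omega⟩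
      exact Relation.EqvGen.trans _ _ _ hstep hrec

/-- The inner-left gap and inner-right gap of a cup are `∼`-equivalent. -/
lemma edge_core {n : ℕ} (E : CrossinglessMatching n) {i j : ℕ} (hij : (i, j) ∈ E.cups) :
    Relation.EqvGen (cupRel n E) i (j - 1) := by
  have hb := cup_range E hij
  refine tile E ((j - 1) - i) i (j - 1) rfl (by omega) ?_
  intro p hp1 hp2
  obtain ⟨q, hq, hpq, h1, h2⟩ := partner_inside E hij hp1 (by omega)
  exact ⟨q, hq, hpq, h1, by omega⟩

/-- Two cups sharing an endpoint are equal. -/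
lemma cup_eq_of_shared {n : ℕ} (E : CrossinglessMatching n) {q q' : ℕ × ℕ}
    (hq : q ∈ E.cups) (hq' : q' ∈ E.cups) {p : ℕ}
    (h : p = q.1 ∨ p = q.2) (h' : p = q'.1 ∨ p = q'.2) : q = q' := by
  by_contra hne
  obtain ⟨d1, d2, d3, d4⟩ := E.disjoint' q hq q' hq' hne
  rcases h with rfl | rfl <;> rcases h' with h' | h'
  exacts [d1 h', d2 h', d3 h', d4 h']

/-- The partner of a point in a matching (the point itself if unmatched). -/
noncomputable def pnr {n : ℕ} (E : CrossinglessMatching n) (p : ℕ) : ℕ :=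
  if h : ∃ q ∈ E.cups, p = q.1 ∨ p = q.2 then
    (if p = h.choose.1 then h.choose.2 else h.choose.1) else p

lemma pnr_left {n : ℕ} (E : CrossinglessMatching n) {q : ℕ × ℕ} (hq : q ∈ E.cups)
    {p : ℕ} (hp : p = q.1) : pnr E p = q.2 := by
  have hex : ∃ q' ∈ E.cups, p = q'.1 ∨ p = q'.2 := ⟨q, hq, Or.inl hp⟩
  rw [pnr, dif_pos hex]
  obtain ⟨hmem, hor⟩ := hex.choose_spec
  have heq : hex.choose = q := cup_eq_of_shared E hmem hq hor (Or.inl hp)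
  rw [heq, if_pos hp]

lemma pnr_right {n : ℕ} (E : CrossinglessMatching n) {q : ℕ × ℕ} (hq : q ∈ E.cups)
    {p : ℕ} (hp : p = q.2) : pnr E p = q.1 := by
  have hex : ∃ q' ∈ E.cups, p = q'.1 ∨ p = q'.2 := ⟨q, hq, Or.inr hp⟩
  have hr := E.mem_range q hq
  rw [pnr, dif_pos hex]
  obtain ⟨hmem, hor⟩ := hex.choose_spec
  have heq : hex.choose = q := cup_eq_of_shared E hmem hq hor (Or.inr hp)
  rw [heq, if_neg (by omega)]

/-- A finite set admitting a fixed-point-free involution has even cardinality. -/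
lemma even_card_of_invol (f : ℕ → ℕ) :
    ∀ k (S : Finset ℕ), S.card = k →
      (∀ p ∈ S, f p ∈ S ∧ f (f p) = p ∧ f p ≠ p) → Even S.card := by
  intro k
  induction k using Nat.strong_induction_on with
  | _ k ih =>
    intro S hcard hf
    rcases S.eq_empty_or_nonempty with rfl | ⟨p, hp⟩
    · simp
    · obtain ⟨h1, h2, h3⟩ := hf p hp
      have hp' : f p ∈ S.erase p := Finset.mem_erase.mpr ⟨h3, h1⟩
      have hc1 : (S.erase p).card = S.card - 1 := Finset.card_erase_of_mem hp
      have hpos : 1 ≤ S.card := Finset.card_pos.mpr ⟨p, hp⟩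
      have hpos2 : 2 ≤ S.card := by
        have := Finset.card_pos.mpr ⟨f p, hp'⟩
        omega
      have hc2 : ((S.erase p).erase (f p)).card = S.card - 2 := by
        rw [Finset.card_erase_of_mem hp', hc1]
        omega
      have hS' : ∀ q ∈ (S.erase p).erase (f p),
          f q ∈ (S.erase p).erase (f p) ∧ f (f q) = q ∧ f q ≠ q := by
        intro q hq
        have hq0 : q ≠ f p := (Finset.mem_erase.mp hq).1
        have hq1 : q ≠ p := (Finset.mem_erase.mp (Finset.mem_erase.mp hq).2).1
        have hqS : q ∈ S := (Finset.mem_erase.mp (Finset.mem_erase.mp hq).2).2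
        obtain ⟨g1, g2, g3⟩ := hf q hqS
        refine ⟨?_, g2, g3⟩
        rw [Finset.mem_erase, Finset.mem_erase]
        refine ⟨?_, ?_, g1⟩
        · intro hcon
          apply hq1
          rw [← g2, hcon, h2]
        · intro hcon
          apply hq0
          rw [← g2, hcon]
      have hev := ih (S.card - 2) (by omega) _ hc2 hS'
      rw [hc2] at hev
      obtain ⟨t, ht⟩ := hev
      exact ⟨t + 1, by omega⟩

lemma conn_adj {n : ℕ} {C D : CrossinglessMatching n} {x y m0 : ℕ}
    (h : Adj n C D x y) (hc : Conn n C D x m0) : Conn n C D y m0 :=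
  Relation.EqvGen.trans _ _ _ (Relation.EqvGen.symm _ _ (Relation.EqvGen.rel _ _ h)) hc

lemma conn_adj' {n : ℕ} {C D : CrossinglessMatching n} {x y m0 : ℕ}
    (h : Adj n C D x y) (hc : Conn n C D y m0) : Conn n C D x m0 :=
  Relation.EqvGen.trans _ _ _ (Relation.EqvGen.rel _ _ h) hc

/-- One step of the parity invariance: a single cup relation preserves the parity of
the number of points of a fixed glued component weakly to the left of the gap. -/
lemma count_step {n : ℕ} (C D : CrossinglessMatching n) (E : CrossinglessMatching n)
    (hsub : ∀ x y, (x, y) ∈ E.cups → Adj n C D x y) (m0 : ℕ) {a b : ℕ}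
    (h : cupRel n E a b) :
    ((Finset.Ioc 0 a).filter (fun p => Conn n C D p m0)).card % 2
      = ((Finset.Ioc 0 b).filter (fun p => Conn n C D p m0)).card % 2 := by
  obtain ⟨q, hq, h1, h2⟩ := h
  have hqe : q = (a + 1, b) := Prod.ext h1 h2
  subst hqe
  have hb := cup_range E hq
  have hadj : Adj n C D (a + 1) b := hsub _ _ hq
  have heven : Even (((Finset.Ioc a b).filter (fun p => Conn n C D p m0)).card) := by
    refine even_card_of_invol (pnr E) _ _ rfl ?_
    intro p hp
    rw [Finset.mem_filter, Finset.mem_Ioc] at hp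
    obtain ⟨⟨hpa, hpb⟩, hpc⟩ := hp
    by_cases hp1 : p = a + 1
    · have hf : pnr E p = b := pnr_left E hq hp1
      refine ⟨?_, ?_, ?_⟩
      · rw [hf, Finset.mem_filter, Finset.mem_Ioc]
        exact ⟨⟨by omega, le_refl b⟩, conn_adj hadj (hp1 ▸ hpc)⟩
      · rw [hf, pnr_right E hq rfl, hp1]
      · rw [hf]; omega
    · by_cases hp2 : p = b
      · have hf : pnr E p = a + 1 := pnr_right E hq hp2
        refine ⟨?_, ?_, ?_⟩
        · rw [hf, Finset.mem_filter, Finset.mem_Ioc]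
          exact ⟨⟨by omega, by omega⟩, conn_adj' hadj (hp2 ▸ hpc)⟩
        · rw [hf, pnr_left E hq rfl, hp2]
        · rw [hf]; omega
      · obtain ⟨q', hq', hpq', hl, hr⟩ := partner_inside (p := p) E hq (by omega) (by omega)
        have hr' := E.mem_range q' hq'
        have hq'' : (q'.1, q'.2) ∈ E.cups := by rw [Prod.mk.eta]; exact hq'
        have hadj' : Adj n C D q'.1 q'.2 := hsub _ _ hq''
        rcases hpq' with hpl | hpr
        · have hf : pnr E p = q'.2 := pnr_left E hq' hpl
          refine ⟨?_, ?_, ?_⟩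
          · rw [hf, Finset.mem_filter, Finset.mem_Ioc]
            exact ⟨⟨by omega, by omega⟩, conn_adj hadj' (hpl ▸ hpc)⟩
          · rw [hf, pnr_right E hq' rfl, hpl]
          · rw [hf]; omega
        · have hf : pnr E p = q'.1 := pnr_right E hq' hpr
          refine ⟨?_, ?_, ?_⟩
          · rw [hf, Finset.mem_filter, Finset.mem_Ioc]
            exact ⟨⟨by omega, by omega⟩, conn_adj' hadj' (hpr ▸ hpc)⟩
          · rw [hf, pnr_left E hq' rfl, hpr]
          · rw [hf]; omega
  have hdisj : Disjoint (Finset.Ioc 0 a) (Finset.Ioc a b) := by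
    rw [Finset.disjoint_left]
    intro p hp hp2
    rw [Finset.mem_Ioc] at hp hp2
    omega
  have hsplit : Finset.Ioc 0 b = Finset.Ioc 0 a ∪ Finset.Ioc a b :=
    (Finset.Ioc_union_Ioc_eq_Ioc (Nat.zero_le a) (by omega)).symm
  rw [hsplit, Finset.filter_union,
    Finset.card_union_of_disjoint (Finset.disjoint_filter_filter hdisj)]
  obtain ⟨t, ht⟩ := heven
  omega

/-- Parity invariance along `≈`. -/
lemma count_parity {n : ℕ} (C D : CrossinglessMatching n) (m0 : ℕ) {a b : ℕ}
    (h : approxRel n C D a b) :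
    ((Finset.Ioc 0 a).filter (fun p => Conn n C D p m0)).card % 2
      = ((Finset.Ioc 0 b).filter (fun p => Conn n C D p m0)).card % 2 := by
  induction h with
  | rel x y hxy =>
    rcases hxy with h | h
    · exact count_step C D C (fun x y hx => Or.inl hx) m0 h
    · exact count_step C D D (fun x y hx => Or.inr (Or.inr (Or.inl hx))) m0 h
  | refl x => rfl
  | symm x y _ ih => exact ih.symm
  | trans x y z _ _ ih1 ih2 => exact ih1.trans ih2

/-- Transfer of "the `≈`-class of gap `m` touches the point `x`" along one cup. -/
lemma touch_cup {n : ℕ} (C D : CrossinglessMatching n) (E : CrossinglessMatching n)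
    (hE : ∀ a b, cupRel n E a b → cupRel n C a b ∨ cupRel n D a b)
    {i j : ℕ} (hij : (i, j) ∈ E.cups) (m : ℕ) :
    (approxRel n C D m i ∨ approxRel n C D m (i - 1)) ↔
      (approxRel n C D m j ∨ approxRel n C D m (j - 1)) := by
  have hb := cup_range E hij
  have r1 : approxRel n C D (i - 1) j :=
    Relation.EqvGen.rel _ _ (hE _ _ ⟨(i, j), hij, by omega, rfl⟩)
  have r2 : approxRel n C D i (j - 1) := Relation.EqvGen.mono hE _ _ (edge_core E hij)
  constructor
  · rintro (h | h)
    · exact Or.inr (Relation.EqvGen.trans _ _ _ h r2)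
    · exact Or.inl (Relation.EqvGen.trans _ _ _ h r1)
  · rintro (h | h)
    · exact Or.inr (Relation.EqvGen.trans _ _ _ h (Relation.EqvGen.symm _ _ r1))
    · exact Or.inl (Relation.EqvGen.trans _ _ _ h (Relation.EqvGen.symm _ _ r2))

/-- Transfer of touching along connectivity in the glued diagram. -/
lemma touch_conn {n : ℕ} (C D : CrossinglessMatching n) (m : ℕ) {a b : ℕ}
    (h : Conn n C D a b) :
    (approxRel n C D m a ∨ approxRel n C D m (a - 1)) ↔
      (approxRel n C D m b ∨ approxRel n C D m (b - 1)) := by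
  induction h with
  | rel x y hxy =>
    rcases hxy with h | h | h | h
    · exact touch_cup C D C (fun a b hx => Or.inl hx) h m
    · exact (touch_cup C D C (fun a b hx => Or.inl hx) h m).symm
    · exact touch_cup C D D (fun a b hx => Or.inr hx) h m
    · exact (touch_cup C D D (fun a b hx => Or.inr hx) h m).symm
  | refl x => exact Iff.rfl
  | symm x y _ ih => exact ih.symm
  | trans x y z _ _ ih1 ih2 => exact ih1.trans ih2

/-- Connected points are equal or both lie in `{1, …, n}`. -/
lemma conn_bounds {n : ℕ} {C D : CrossinglessMatching n} {a b : ℕ}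
    (h : Conn n C D a b) : a = b ∨ (1 ≤ a ∧ a ≤ n ∧ 1 ≤ b ∧ b ≤ n) := by
  induction h with
  | rel x y hxy =>
    right
    rcases hxy with h | h | h | h
    · have := cup_range C h; omega
    · have := cup_range C h; omega
    · have := cup_range D h; omega
    · have := cup_range D h; omega
  | refl x => exact Or.inl rfl
  | symm x y _ ih => rcases ih with h | h; exacts [Or.inl h.symm, Or.inr (by omega)]
  | trans x y z _ _ ih1 ih2 =>
    rcases ih1 with h1 | h1 <;> rcases ih2 with h2 | h2
    · exact Or.inl (h1.trans h2)
    · exact Or.inr (by omega)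
    · exact Or.inr (by omega)
    · exact Or.inr (by omega)

/-- The minimal elements of the equivalence classes of `≈_{C,D}` on
`{0, 1, …, n}` are `0` together with exactly the leftmost vertices of the circles and
of the lines (i.e. of the connected components) of the glued diagram `D̄C`. -/
theorem minimal_representatives (n : ℕ) (hn : 1 ≤ n) (C D : CrossinglessMatching n)
    (m : ℕ) (hm : m ≤ n) :
    (∀ j, j ≤ n → approxRel n C D m j → m ≤ j) ↔ (m = 0 ∨ IsLeftmost n C D m) := by
  constructor
  · intro hmin
    rcases Nat.eq_zero_or_pos m with rfl | hpos
    · exact Or.inl rfl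
    · refine Or.inr ⟨hpos, hm, ?_⟩
      intro u hu hconn
      have htouch : approxRel n C D m u ∨ approxRel n C D m (u - 1) :=
        (touch_conn C D m hconn).mpr (Or.inl (Relation.EqvGen.refl m))
      rcases conn_bounds hconn with heq | hbnd
      · omega
      · rcases htouch with h | h
        · exact hmin u hbnd.2.1 h
        · have := hmin (u - 1) (by omega) h
          omega
  · rintro (rfl | ⟨h1, h2, hlm⟩) j hj hrel
    · exact Nat.zero_le j
    · by_contra hlt
      push_neg at hlt
      have hpar := count_parity C D m hrel
      have hcm : ((Finset.Ioc 0 m).filter (fun p => Conn n C D p m)).card = 1 := by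
        have hset : (Finset.Ioc 0 m).filter (fun p => Conn n C D p m) = {m} := by
          ext p
          rw [Finset.mem_filter, Finset.mem_Ioc, Finset.mem_singleton]
          constructor
          · rintro ⟨⟨hp0, hpm⟩, hc⟩
            have := hlm p hp0 hc
            omega
          · rintro rfl
            exact ⟨⟨h1, le_refl p⟩, Relation.EqvGen.refl p⟩
        rw [hset, Finset.card_singleton]
      have hcj : ((Finset.Ioc 0 j).filter (fun p => Conn n C D p m)).card = 0 := by
        rw [Finset.card_eq_zero, Finset.filter_eq_empty_iff]
        intro p hp
        rw [Finset.mem_Ioc] at hp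
        intro hc
        have := hlm p (by omega) hc
        omega
      rw [hcm, hcj] at hpar
      omega

end Springer
end

section
/- Let w and w' be weight sequences with associated crossingless matchings C = m(w) and D = m(w'). The number of orientations of the glued diagram D̄C is: zero if some line of D̄C is not orientable (i.e. admits no labeling of its vertices by ∧,∨ that is opposite across every edge, agrees with w at every vertex that is a ray of C, and agrees with w' at every vertex that is a ray of D); equal to 2^c if every line of D̄C is orientable, where c is the number of circles of D̄C; and in particular equal to one exactly when every line is orientable and there are no circles. -/
open Module

namespace Springer

/-! ### Auxiliary machinery -/

/-- Local orientation condition: everything in `OrientsGlued` except the weight count. -/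
def LocOrient (n : ℕ) (w w' : Fin n → Bool) (C D : CrossinglessMatching n)
    (v : Fin n → Bool) : Prop :=
  (∀ p ∈ C.cups, ∀ (h1 : p.1 - 1 < n) (h2 : p.2 - 1 < n),
      v ⟨p.1 - 1, h1⟩ ≠ v ⟨p.2 - 1, h2⟩) ∧
  (∀ p ∈ D.cups, ∀ (h1 : p.1 - 1 < n) (h2 : p.2 - 1 < n),
      v ⟨p.1 - 1, h1⟩ ≠ v ⟨p.2 - 1, h2⟩) ∧
  (∀ i : Fin n, ¬ Matched n C (i.val + 1) → v i = w i) ∧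
  (∀ i : Fin n, ¬ Matched n D (i.val + 1) → v i = w' i)

/-- Extension of a labeling to `ℕ` (vertex `j` corresponds to index `j - 1`). -/
def vext (n : ℕ) (v : Fin n → Bool) (j : ℕ) : Bool :=
  if h : j - 1 < n then v ⟨j - 1, h⟩ else false

lemma adj_bounds {n : ℕ} {C D : CrossinglessMatching n} {a b : ℕ}
    (h : Adj n C D a b) : 1 ≤ a ∧ a ≤ n ∧ 1 ≤ b ∧ b ≤ n := by
  rcases h with h | h | h | h
  · have := C.mem_range _ h; simp only at this; omega
  · have := C.mem_range _ h; simp only at this; omega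
  · have := D.mem_range _ h; simp only at this; omega
  · have := D.mem_range _ h; simp only at this; omega

lemma conn_cases {n : ℕ} {C D : CrossinglessMatching n} {a b : ℕ}
    (h : Conn n C D a b) : a = b ∨ ((1 ≤ a ∧ a ≤ n) ∧ (1 ≤ b ∧ b ≤ n)) := by
  induction h with
  | rel x y hxy => have := adj_bounds hxy; omega
  | refl x => omega
  | symm x y _ ih => omega
  | trans x y z _ _ ih1 ih2 => omega

lemma circle_congr {n : ℕ} {C D : CrossinglessMatching n} {a b : ℕ}
    (h : Conn n C D a b) : IsCircleComp n C D a ↔ IsCircleComp n C D b := by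
  constructor
  · intro hc u hu
    exact hc u (Relation.EqvGen.trans _ _ _ hu (Relation.EqvGen.symm _ _ h))
  · intro hc u hu
    exact hc u (Relation.EqvGen.trans _ _ _ hu h)

/-- Every cup of a crossingless matching has endpoints of opposite parity. -/
lemma cup_parity {n : ℕ} (C : CrossinglessMatching n) {p : ℕ × ℕ} (hp : p ∈ C.cups) :
    p.1 % 2 ≠ p.2 % 2 := by
  classical
  have hr := C.mem_range p hp
  set T : Finset (ℕ × ℕ) := C.cups.filter (fun q => p.1 < q.1 ∧ q.2 < p.2) with hT
  have hIoo : Finset.Ioo p.1 p.2 = T.biUnion (fun q => {q.1, q.2}) := by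
    ext m
    simp only [Finset.mem_Ioo, Finset.mem_biUnion, hT, Finset.mem_filter,
      Finset.mem_insert, Finset.mem_singleton]
    constructor
    · rintro ⟨h1, h2⟩
      obtain ⟨q, hq, hm⟩ := C.rays_outside p hp m h1 h2
      have hqr := C.mem_range q hq
      have hne : p ≠ q := by rintro rfl; omega
      have hd := C.disjoint' p hp q hq hne
      have hnc1 := C.noncross p hp q hq
      have hnc2 := C.noncross q hq p hp
      exact ⟨q, ⟨hq, by omega, by omega⟩, hm⟩
    · rintro ⟨q, ⟨hq, h1, h2⟩, hm⟩
      have := C.mem_range q hq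
      omega
  have hdisj : ∀ q ∈ T, ∀ q' ∈ T, q ≠ q' →
      Disjoint ({q.1, q.2} : Finset ℕ) {q'.1, q'.2} := by
    intro q hq q' hq' hne
    rw [hT, Finset.mem_filter] at hq hq'
    have hd := C.disjoint' q hq.1 q' hq'.1 hne
    rw [Finset.disjoint_left]
    intro a ha ha'
    simp only [Finset.mem_insert, Finset.mem_singleton] at ha ha'
    omega
  have hcard : (Finset.Ioo p.1 p.2).card = 2 * T.card := by
    rw [hIoo, Finset.card_biUnion hdisj]
    rw [Finset.sum_congr rfl (fun q hq => ?_), Finset.sum_const, smul_eq_mul, mul_comm]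
    have hqr := C.mem_range q (by rw [hT, Finset.mem_filter] at hq; exact hq.1)
    exact Finset.card_pair (by omega)
  rw [Nat.card_Ioo] at hcard
  omega

lemma vext_flip {n : ℕ} {w w' : Fin n → Bool} {C D : CrossinglessMatching n}
    {v : Fin n → Bool} (hv : LocOrient n w w' C D v) {a b : ℕ}
    (h : Adj n C D a b) : vext n v a ≠ vext n v b := by
  rcases h with h | h | h | h
  · have hr := C.mem_range _ h; simp only at hr
    have h1 : a - 1 < n := by omega
    have h2 : b - 1 < n := by omega
    have := hv.1 (a, b) h h1 h2
    simpa [vext, h1, h2] using this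
  · have hr := C.mem_range _ h; simp only at hr
    have h1 : a - 1 < n := by omega
    have h2 : b - 1 < n := by omega
    have := hv.1 (b, a) h h2 h1
    simp only at this
    simpa [vext, h1, h2] using this.symm
  · have hr := D.mem_range _ h; simp only at hr
    have h1 : a - 1 < n := by omega
    have h2 : b - 1 < n := by omega
    have := hv.2.1 (a, b) h h1 h2
    simpa [vext, h1, h2] using this
  · have hr := D.mem_range _ h; simp only at hr
    have h1 : a - 1 < n := by omega
    have h2 : b - 1 < n := by omega
    have := hv.2.1 (b, a) h h2 h1
    simp only at this
    simpa [vext, h1, h2] using this.symm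

lemma vext_prop {n : ℕ} {w w' : Fin n → Bool} {C D : CrossinglessMatching n}
    {v v' : Fin n → Bool} (hv : LocOrient n w w' C D v) (hv' : LocOrient n w w' C D v')
    {a b : ℕ} (h : Conn n C D a b) :
    (vext n v a = vext n v' a ↔ vext n v b = vext n v' b) := by
  induction h with
  | rel x y hxy =>
    have f1 := vext_flip hv hxy
    have f2 := vext_flip hv' hxy
    cases h1 : vext n v x <;> cases h2 : vext n v y <;>
      cases h3 : vext n v' x <;> cases h4 : vext n v' y <;> simp_all
  | refl x => exact Iff.rfl
  | symm x y _ ih => exact ih.symm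
  | trans x y z _ _ ih1 ih2 => exact ih1.trans ih2

open Classical in
/-- The vertex set of the connected component of `m` inside `{1, …, n}`. -/
noncomputable def compSet (n : ℕ) (C D : CrossinglessMatching n) (m : ℕ) : Finset ℕ :=
  (Finset.Icc 1 n).filter (fun u => Conn n C D u m)

open Classical in
/-- The leftmost vertex of the component of `m`. -/
noncomputable def lm (n : ℕ) (C D : CrossinglessMatching n) (m : ℕ) : ℕ :=
  if h : (compSet n C D m).Nonempty then (compSet n C D m).min' h else 0

lemma mem_compSet {n : ℕ} {C D : CrossinglessMatching n} {u m : ℕ} :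
    u ∈ compSet n C D m ↔ (1 ≤ u ∧ u ≤ n) ∧ Conn n C D u m := by
  classical
  rw [compSet, Finset.mem_filter, Finset.mem_Icc]

lemma compSet_self {n : ℕ} {C D : CrossinglessMatching n} {m : ℕ}
    (h1 : 1 ≤ m) (h2 : m ≤ n) : m ∈ compSet n C D m :=
  mem_compSet.mpr ⟨⟨h1, h2⟩, Relation.EqvGen.refl m⟩

lemma compSet_congr {n : ℕ} {C D : CrossinglessMatching n} {a b : ℕ}
    (h : Conn n C D a b) : compSet n C D a = compSet n C D b := by
  ext u
  rw [mem_compSet, mem_compSet]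
  constructor
  · rintro ⟨hu, hc⟩; exact ⟨hu, Relation.EqvGen.trans _ _ _ hc h⟩
  · rintro ⟨hu, hc⟩; exact ⟨hu, Relation.EqvGen.trans _ _ _ hc (Relation.EqvGen.symm _ _ h)⟩

lemma lm_mem {n : ℕ} {C D : CrossinglessMatching n} {m : ℕ}
    (h1 : 1 ≤ m) (h2 : m ≤ n) : lm n C D m ∈ compSet n C D m := by
  classical
  have hne : (compSet n C D m).Nonempty := ⟨m, compSet_self h1 h2⟩
  rw [lm, dif_pos hne]
  exact (compSet n C D m).min'_mem hne

lemma lm_le {n : ℕ} {C D : CrossinglessMatching n} {m u : ℕ}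
    (hu : u ∈ compSet n C D m) : lm n C D m ≤ u := by
  classical
  have hne : (compSet n C D m).Nonempty := ⟨u, hu⟩
  rw [lm, dif_pos hne]
  exact (compSet n C D m).min'_le u hu

lemma lm_congr {n : ℕ} {C D : CrossinglessMatching n} {a b : ℕ}
    (h : Conn n C D a b) : lm n C D a = lm n C D b := by
  rw [lm, lm, compSet_congr h]

lemma lm_conn {n : ℕ} {C D : CrossinglessMatching n} {m : ℕ}
    (h1 : 1 ≤ m) (h2 : m ≤ n) : Conn n C D (lm n C D m) m :=
  (mem_compSet.mp (lm_mem (C:=C) (D:=D) h1 h2)).2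

lemma lm_leftmost {n : ℕ} {C D : CrossinglessMatching n} {m : ℕ}
    (h1 : 1 ≤ m) (h2 : m ≤ n) : IsLeftmost n C D (lm n C D m) := by
  have hmem := mem_compSet.mp (lm_mem (C:=C) (D:=D) h1 h2)
  refine ⟨hmem.1.1, hmem.1.2, ?_⟩
  intro u hu hc
  have hconn : Conn n C D u m := Relation.EqvGen.trans _ _ _ hc hmem.2
  rcases conn_cases hc with rfl | hb
  · exact le_refl _
  · exact lm_le (mem_compSet.mpr ⟨⟨hb.1.1, hb.1.2⟩, hconn⟩)

lemma lm_of_leftmost {n : ℕ} {C D : CrossinglessMatching n} {x : ℕ}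
    (hx : IsLeftmost n C D x) : lm n C D x = x := by
  refine le_antisymm (lm_le (compSet_self hx.1 hx.2.1)) ?_
  have hmem := mem_compSet.mp (lm_mem (C:=C) (D:=D) hx.1 hx.2.1)
  exact hx.2.2 _ hmem.1.1 hmem.2

open Classical in
/-- A choice of orientation for orientable components. -/
noncomputable def gpick (n : ℕ) (w w' : Fin n → Bool) (C D : CrossinglessMatching n)
    (r : ℕ) : ℕ → Bool :=
  if h : ComponentOrientable n w w' C D r then h.choose else fun _ => false

lemma gpick_spec {n : ℕ} {w w' : Fin n → Bool} {C D : CrossinglessMatching n} {r : ℕ}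
    (h : ComponentOrientable n w w' C D r) :
    (∀ i j, Conn n C D i r → Adj n C D i j → gpick n w w' C D r i ≠ gpick n w w' C D r j) ∧
    (∀ i, Conn n C D i r → 1 ≤ i → i ≤ n → ¬ Matched n C i →
      ∀ hh : i - 1 < n, gpick n w w' C D r i = w ⟨i - 1, hh⟩) ∧
    (∀ i, Conn n C D i r → 1 ≤ i → i ≤ n → ¬ Matched n D i →
      ∀ hh : i - 1 < n, gpick n w w' C D r i = w' ⟨i - 1, hh⟩) := by
  rw [gpick, dif_pos h]
  exact h.choose_spec

open Classical in
/-- The labeling built from a boolean function on circle components and the chosen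
orientations of line components. -/
noncomputable def buildOrient (n : ℕ) (w w' : Fin n → Bool) (C D : CrossinglessMatching n)
    (f : ℕ → Bool) : Fin n → Bool := fun i =>
  if IsCircleComp n C D (i.val + 1) then
    (if (i.val + 1) % 2 = (lm n C D (i.val + 1)) % 2 then f (lm n C D (i.val + 1))
     else !(f (lm n C D (i.val + 1))))
  else gpick n w w' C D (lm n C D (i.val + 1)) (i.val + 1)

lemma not_circle_of_ray {n : ℕ} {C D : CrossinglessMatching n} {m : ℕ}
    (h : ¬ Matched n C m ∨ ¬ Matched n D m) : ¬ IsCircleComp n C D m := by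
  intro hc
  have := hc m (Relation.EqvGen.refl m)
  tauto

/-- The key cup computation for `buildOrient`. -/
lemma buildOrient_cup {n : ℕ} {w w' : Fin n → Bool} {C D : CrossinglessMatching n}
    (H : ∀ v0, 1 ≤ v0 → v0 ≤ n → ¬ IsCircleComp n C D v0 →
      ComponentOrientable n w w' C D v0)
    (f : ℕ → Bool) {p : ℕ × ℕ} (hr : 1 ≤ p.1 ∧ p.1 < p.2 ∧ p.2 ≤ n)
    (hpar : p.1 % 2 ≠ p.2 % 2) (hadj : Adj n C D p.1 p.2)
    (h1 : p.1 - 1 < n) (h2 : p.2 - 1 < n) :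
    buildOrient n w w' C D f ⟨p.1 - 1, h1⟩ ≠ buildOrient n w w' C D f ⟨p.2 - 1, h2⟩ := by
  have e1 : p.1 - 1 + 1 = p.1 := by omega
  have e2 : p.2 - 1 + 1 = p.2 := by omega
  have hconn : Conn n C D p.1 p.2 := Relation.EqvGen.rel _ _ hadj
  have hlm : lm n C D p.1 = lm n C D p.2 := lm_congr hconn
  have hcirc : IsCircleComp n C D p.1 ↔ IsCircleComp n C D p.2 := circle_congr hconn
  simp only [buildOrient]
  rw [e1, e2]
  by_cases hc : IsCircleComp n C D p.1
  · rw [if_pos hc, if_pos (hcirc.mp hc), ← hlm]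
    set L := lm n C D p.1
    rcases eq_or_ne (p.1 % 2) (L % 2) with hL | hL
    · rw [if_pos hL, if_neg (by omega)]
      cases f L <;> simp
    · rw [if_neg hL, if_pos (by omega)]
      cases f L <;> simp
  · rw [if_neg hc, if_neg (fun hh => hc (hcirc.mpr hh)), ← hlm]
    have hm1 : 1 ≤ p.1 := hr.1
    have hm2 : p.1 ≤ n := by omega
    have hlmem := mem_compSet.mp (lm_mem (C:=C) (D:=D) hm1 hm2)
    have hnc : ¬ IsCircleComp n C D (lm n C D p.1) :=
      fun hh => hc ((circle_congr (lm_conn hm1 hm2)).mp hh)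
    have hspec := gpick_spec (H _ hlmem.1.1 hlmem.1.2 hnc)
    exact hspec.1 p.1 p.2 (Relation.EqvGen.symm _ _ (lm_conn hm1 hm2)) hadj

lemma buildOrient_loc {n : ℕ} {w w' : Fin n → Bool} {C D : CrossinglessMatching n}
    (H : ∀ v0, 1 ≤ v0 → v0 ≤ n → ¬ IsCircleComp n C D v0 →
      ComponentOrientable n w w' C D v0)
    (f : ℕ → Bool) : LocOrient n w w' C D (buildOrient n w w' C D f) := by
  refine ⟨?_, ?_, ?_, ?_⟩
  · intro p hp h1 h2
    exact buildOrient_cup H f (C.mem_range p hp) (cup_parity C hp)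
      (Or.inl (by rwa [Prod.mk.eta])) h1 h2
  · intro p hp h1 h2
    exact buildOrient_cup H f (D.mem_range p hp) (cup_parity D hp)
      (Or.inr (Or.inr (Or.inl (by rwa [Prod.mk.eta])))) h1 h2
  · intro i hi
    have hm1 : 1 ≤ i.val + 1 := by omega
    have hm2 : i.val + 1 ≤ n := i.isLt
    have hnc : ¬ IsCircleComp n C D (i.val + 1) := not_circle_of_ray (Or.inl hi)
    rw [buildOrient, if_neg hnc]
    have hlmem := mem_compSet.mp (lm_mem (C:=C) (D:=D) hm1 hm2)
    have hnc' : ¬ IsCircleComp n C D (lm n C D (i.val + 1)) :=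
      fun hh => hnc ((circle_congr (lm_conn hm1 hm2)).mp hh)
    have hspec := gpick_spec (H _ hlmem.1.1 hlmem.1.2 hnc')
    have hh : i.val + 1 - 1 < n := by omega
    have := hspec.2.1 (i.val + 1) (Relation.EqvGen.symm _ _ (lm_conn hm1 hm2))
      hm1 hm2 hi hh
    rw [this]
    congr 1
  · intro i hi
    have hm1 : 1 ≤ i.val + 1 := by omega
    have hm2 : i.val + 1 ≤ n := i.isLt
    have hnc : ¬ IsCircleComp n C D (i.val + 1) := not_circle_of_ray (Or.inr hi)
    rw [buildOrient, if_neg hnc]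
    have hlmem := mem_compSet.mp (lm_mem (C:=C) (D:=D) hm1 hm2)
    have hnc' : ¬ IsCircleComp n C D (lm n C D (i.val + 1)) :=
      fun hh => hnc ((circle_congr (lm_conn hm1 hm2)).mp hh)
    have hspec := gpick_spec (H _ hlmem.1.1 hlmem.1.2 hnc')
    have hh : i.val + 1 - 1 < n := by omega
    have := hspec.2.2 (i.val + 1) (Relation.EqvGen.symm _ _ (lm_conn hm1 hm2))
      hm1 hm2 hi hh
    rw [this]
    congr 1

instance matchedDecidable {n m : ℕ} {C : CrossinglessMatching n} : Decidable (Matched n C m) :=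
  decidable_of_iff (∃ p ∈ C.cups, m = p.1 ∨ m = p.2) Iff.rfl

lemma card_matched_true {n : ℕ} (C : CrossinglessMatching n) (u : Fin n → Bool)
    (hu : ∀ p ∈ C.cups, ∀ (h1 : p.1 - 1 < n) (h2 : p.2 - 1 < n),
      u ⟨p.1 - 1, h1⟩ ≠ u ⟨p.2 - 1, h2⟩) :
    (Finset.univ.filter fun i : Fin n => u i = true ∧ Matched n C (i.val + 1)).card
      = C.cups.card := by
  classical
  have hset : (Finset.univ.filter fun i : Fin n => u i = true ∧ Matched n C (i.val + 1))
      = C.cups.biUnion (fun p => Finset.univ.filter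
          (fun i : Fin n => (i.val + 1 = p.1 ∨ i.val + 1 = p.2) ∧ u i = true)) := by
    ext i
    simp only [Finset.mem_filter, Finset.mem_univ, true_and, Finset.mem_biUnion]
    simp only [Matched]
    constructor
    · rintro ⟨hui, p, hp, hm⟩
      exact ⟨p, hp, hm, hui⟩
    · rintro ⟨p, hp, hm, hui⟩
      exact ⟨hui, p, hp, hm⟩
  rw [hset, Finset.card_biUnion]
  · rw [Finset.sum_congr rfl (fun p hp => ?_), Finset.sum_const, smul_eq_mul, mul_one]
    have hr := C.mem_range p hp
    have h1 : p.1 - 1 < n := by omega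
    have h2 : p.2 - 1 < n := by omega
    have hne := hu p hp h1 h2
    rw [Finset.card_eq_one]
    by_cases hcase : u ⟨p.1 - 1, h1⟩ = true
    · refine ⟨⟨p.1 - 1, h1⟩, ?_⟩
      ext j
      simp only [Finset.mem_filter, Finset.mem_univ, true_and, Finset.mem_singleton,
        Fin.ext_iff]
      constructor
      · rintro ⟨hj | hj, huj⟩
        · omega
        · exfalso
          have hje : j = ⟨p.2 - 1, h2⟩ := Fin.ext (by simp only [Fin.val_mk]; omega)
          rw [hje] at huj
          rw [hcase, huj] at hne
          exact hne rfl
      · intro hj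
        have hje : j = ⟨p.1 - 1, h1⟩ := Fin.ext (by simp only [Fin.val_mk]; omega)
        rw [hje]
        exact ⟨Or.inl (by omega), hcase⟩
    · have hcase2 : u ⟨p.2 - 1, h2⟩ = true := by
        cases hc2 : u ⟨p.2 - 1, h2⟩
        · cases hc1 : u ⟨p.1 - 1, h1⟩
          · rw [hc1, hc2] at hne; exact absurd rfl hne
          · exact absurd hc1 hcase
        · rfl
      refine ⟨⟨p.2 - 1, h2⟩, ?_⟩
      ext j
      simp only [Finset.mem_filter, Finset.mem_univ, true_and, Finset.mem_singleton,
        Fin.ext_iff]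
      constructor
      · rintro ⟨hj | hj, huj⟩
        · exfalso
          have hje : j = ⟨p.1 - 1, h1⟩ := Fin.ext (by simp only [Fin.val_mk]; omega)
          rw [hje] at huj
          exact hcase huj
        · omega
      · intro hj
        have hje : j = ⟨p.2 - 1, h2⟩ := Fin.ext (by simp only [Fin.val_mk]; omega)
        rw [hje]
        exact ⟨Or.inr (by omega), hcase2⟩
  · intro p hp q hq hpq
    have hd := C.disjoint' p hp q hq hpq
    have hrp := C.mem_range p hp
    have hrq := C.mem_range q hq
    rw [Function.onFun, Finset.disjoint_left]
    intro i hi hi'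
    simp only [Finset.mem_filter, Finset.mem_univ, true_and] at hi hi'
    omega

lemma weight_of_loc {n k : ℕ} {w w' : Fin n → Bool} {C D : CrossinglessMatching n}
    (hw : IsWeightSeq n k w) (hC : IsMw n w C) {v : Fin n → Bool}
    (hv : LocOrient n w w' C D v) : IsWeightSeq n k v := by
  classical
  have key : ∀ u : Fin n → Bool,
      (∀ p ∈ C.cups, ∀ (h1 : p.1 - 1 < n) (h2 : p.2 - 1 < n),
        u ⟨p.1 - 1, h1⟩ ≠ u ⟨p.2 - 1, h2⟩) →
      (Finset.univ.filter fun i : Fin n => u i = true).card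
        = C.cups.card + (Finset.univ.filter fun i : Fin n =>
            u i = true ∧ ¬ Matched n C (i.val + 1)).card := by
    intro u hu
    have hsplit := Finset.card_filter_add_card_filter_not
      (s := Finset.univ.filter fun i : Fin n => u i = true)
      (p := fun i : Fin n => Matched n C (i.val + 1))
    rw [Finset.filter_filter, Finset.filter_filter, card_matched_true C u hu] at hsplit
    omega
  have h1 := key v hv.1
  have h2 := key w (fun p hp hh1 hh2 => by
    have := hC.1 p hp hh1 hh2
    rw [this.1, this.2]
    simp)
  have hsame : (Finset.univ.filter fun i : Fin n =>
        v i = true ∧ ¬ Matched n C (i.val + 1))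
      = (Finset.univ.filter fun i : Fin n => w i = true ∧ ¬ Matched n C (i.val + 1)) := by
    apply Finset.filter_congr
    intro i _
    by_cases hM : Matched n C (i.val + 1)
    · simp [hM]
    · rw [hv.2.2.1 i hM]
  rw [IsWeightSeq] at hw ⊢
  rw [h1, hsame]
  rw [h2] at hw
  omega

lemma orientable_of_loc {n : ℕ} {w w' : Fin n → Bool} {C D : CrossinglessMatching n}
    {v : Fin n → Bool} (hv : LocOrient n w w' C D v) (v0 : ℕ) :
    ComponentOrientable n w w' C D v0 := by
  refine ⟨vext n v, fun i j _ ha => vext_flip hv ha, ?_, ?_⟩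
  · intro i _ hi1 hi2 hM h
    have e : i - 1 + 1 = i := by omega
    rw [vext, dif_pos h]
    exact hv.2.2.1 ⟨i - 1, h⟩ (by rw [Fin.val_mk, e]; exact hM)
  · intro i _ hi1 hi2 hM h
    have e : i - 1 + 1 = i := by omega
    rw [vext, dif_pos h]
    exact hv.2.2.2 ⟨i - 1, h⟩ (by rw [Fin.val_mk, e]; exact hM)

lemma card_loc_eq {n : ℕ} (hn : 1 ≤ n) {w w' : Fin n → Bool} {C D : CrossinglessMatching n}
    (H : ∀ v0, 1 ≤ v0 → v0 ≤ n → ¬ IsCircleComp n C D v0 →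
      ComponentOrientable n w w' C D v0) :
    Nat.card {v : Fin n → Bool // LocOrient n w w' C D v}
      = 2 ^ Nat.card {x : ℕ // IsLeftmost n C D x ∧ IsCircleComp n C D x} := by
  classical
  have hfin : Finite {x : ℕ // IsLeftmost n C D x ∧ IsCircleComp n C D x} := by
    apply Finite.of_injective (fun x : {x : ℕ // IsLeftmost n C D x ∧ IsCircleComp n C D x} =>
      (⟨x.1, by have := x.2.1.2.1; omega⟩ : Fin (n + 1)))
    intro a b hab
    exact Subtype.ext (by simpa [Fin.ext_iff] using hab)
  have hF : Function.Bijective (fun (v : {v : Fin n → Bool // LocOrient n w w' C D v}) =>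
      (fun x : {x : ℕ // IsLeftmost n C D x ∧ IsCircleComp n C D x} =>
        v.1 ⟨x.1 - 1, by have := x.2.1.1; have := x.2.1.2.1; omega⟩)) := by
    constructor
    · rintro ⟨v, hv⟩ ⟨v', hv'⟩ hvv
      simp only [Subtype.mk.injEq] at hvv ⊢
      funext i
      have hm1 : 1 ≤ i.val + 1 := by omega
      have hm2 : i.val + 1 ≤ n := i.isLt
      obtain ⟨a, hconn, hanch⟩ : ∃ a, Conn n C D a (i.val + 1) ∧ vext n v a = vext n v' a := by
        by_cases hc : IsCircleComp n C D (i.val + 1)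
        · refine ⟨lm n C D (i.val + 1), lm_conn hm1 hm2, ?_⟩
          have hx : IsLeftmost n C D (lm n C D (i.val + 1)) ∧
              IsCircleComp n C D (lm n C D (i.val + 1)) :=
            ⟨lm_leftmost hm1 hm2, (circle_congr (lm_conn hm1 hm2)).mpr hc⟩
          have hcf := congrFun hvv ⟨lm n C D (i.val + 1), hx⟩
          have hlt : lm n C D (i.val + 1) - 1 < n := by
            have := hx.1.1; have := hx.1.2.1; omega
          simpa [vext, hlt] using hcf
        · obtain ⟨a, hconn2, hnm⟩ : ∃ a, Conn n C D a (i.val + 1) ∧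
              ¬ (Matched n C a ∧ Matched n D a) := by
            by_contra hcon
            push_neg at hcon
            exact hc (fun u hu => (hcon u hu))
          have hb : 1 ≤ a ∧ a ≤ n := by
            rcases conn_cases hconn2 with heq | hbb
            · omega
            · exact hbb.1
          have hlt : a - 1 < n := by omega
          have e : a - 1 + 1 = a := by omega
          rw [not_and_or] at hnm
          refine ⟨a, hconn2, ?_⟩
          rcases hnm with hnm | hnm
          · have t1 := hv.2.2.1 ⟨a - 1, hlt⟩ (by rw [Fin.val_mk, e]; exact hnm)
            have t2 := hv'.2.2.1 ⟨a - 1, hlt⟩ (by rw [Fin.val_mk, e]; exact hnm)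
            rw [vext, dif_pos hlt, vext, dif_pos hlt, t1, t2]
          · have t1 := hv.2.2.2 ⟨a - 1, hlt⟩ (by rw [Fin.val_mk, e]; exact hnm)
            have t2 := hv'.2.2.2 ⟨a - 1, hlt⟩ (by rw [Fin.val_mk, e]; exact hnm)
            rw [vext, dif_pos hlt, vext, dif_pos hlt, t1, t2]
      have hres := (vext_prop hv hv' hconn).mp hanch
      have hltm : i.val + 1 - 1 < n := by omega
      rw [vext, dif_pos hltm, vext, dif_pos hltm] at hres
      simpa using hres
    · intro f0
      refine ⟨⟨buildOrient n w w' C D (fun x =>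
        if h : IsLeftmost n C D x ∧ IsCircleComp n C D x then f0 ⟨x, h⟩ else false),
        buildOrient_loc H _⟩, ?_⟩
      funext x
      obtain ⟨x, hx⟩ := x
      have hx1 : 1 ≤ x := hx.1.1
      have hx2 : x ≤ n := hx.1.2.1
      have e : x - 1 + 1 = x := by omega
      simp only [buildOrient, Fin.val_mk]
      rw [e, if_pos hx.2, lm_of_leftmost hx.1, if_pos rfl, dif_pos hx]
  rw [Nat.card_eq_of_bijective _ hF, Nat.card_fun]
  simp [Nat.card_eq_fintype_card]

/-- The number of orientations of the glued diagram `D̄C` (with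
`C = m(w)`, `D = m(w')`) is: zero if some line is not orientable; `2 ^ c` if every
line is orientable, where `c` is the number of circles; and equal to one exactly when
every line is orientable and there are no circles. -/
theorem card_orientations_glued (n k : ℕ) (hn : 1 ≤ n) (hkn : 2 * k ≤ n)
    (w w' : Fin n → Bool) (hw : IsWeightSeq n k w) (hw' : IsWeightSeq n k w')
    (C D : CrossinglessMatching n) (hC : IsMw n w C) (hD : IsMw n w' D) :
    ((∃ v0, 1 ≤ v0 ∧ v0 ≤ n ∧ ¬ IsCircleComp n C D v0 ∧
        ¬ ComponentOrientable n w w' C D v0) →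
      Nat.card {v : Fin n → Bool // OrientsGlued n k w w' C D v} = 0) ∧
    ((∀ v0, 1 ≤ v0 → v0 ≤ n → ¬ IsCircleComp n C D v0 →
        ComponentOrientable n w w' C D v0) →
      Nat.card {v : Fin n → Bool // OrientsGlued n k w w' C D v} =
        2 ^ Nat.card {v : ℕ // IsLeftmost n C D v ∧ IsCircleComp n C D v}) ∧
    (Nat.card {v : Fin n → Bool // OrientsGlued n k w w' C D v} = 1 ↔
      ((∀ v0, 1 ≤ v0 → v0 ≤ n → ¬ IsCircleComp n C D v0 →
          ComponentOrientable n w w' C D v0) ∧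
        Nat.card {v : ℕ // IsLeftmost n C D v ∧ IsCircleComp n C D v} = 0)) := by
  classical
  have hiff : ∀ v : Fin n → Bool, OrientsGlued n k w w' C D v ↔ LocOrient n w w' C D v := by
    intro v
    constructor
    · rintro ⟨_, h1, h2, h3, h4⟩; exact ⟨h1, h2, h3, h4⟩
    · intro h; exact ⟨weight_of_loc hw hC h, h.1, h.2.1, h.2.2.1, h.2.2.2⟩
  have hcongr : Nat.card {v : Fin n → Bool // OrientsGlued n k w w' C D v}
      = Nat.card {v : Fin n → Bool // LocOrient n w w' C D v} :=
    Nat.card_congr (Equiv.subtypeEquivRight hiff)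
  have P1 : (∃ v0, 1 ≤ v0 ∧ v0 ≤ n ∧ ¬ IsCircleComp n C D v0 ∧
      ¬ ComponentOrientable n w w' C D v0) →
      Nat.card {v : Fin n → Bool // OrientsGlued n k w w' C D v} = 0 := by
    rintro ⟨v0, -, -, -, h4⟩
    rw [hcongr]
    have : IsEmpty {v : Fin n → Bool // LocOrient n w w' C D v} :=
      ⟨fun vv => h4 (orientable_of_loc vv.2 v0)⟩
    exact Nat.card_of_isEmpty
  have P2 : (∀ v0, 1 ≤ v0 → v0 ≤ n → ¬ IsCircleComp n C D v0 →
      ComponentOrientable n w w' C D v0) →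
      Nat.card {v : Fin n → Bool // OrientsGlued n k w w' C D v}
        = 2 ^ Nat.card {x : ℕ // IsLeftmost n C D x ∧ IsCircleComp n C D x} := by
    intro H
    rw [hcongr]
    exact card_loc_eq hn H
  refine ⟨P1, P2, ?_⟩
  constructor
  · intro h1
    have hH : ∀ v0, 1 ≤ v0 → v0 ≤ n → ¬ IsCircleComp n C D v0 →
        ComponentOrientable n w w' C D v0 := by
      by_contra hcon
      push_neg at hcon
      obtain ⟨v0, a, b, c, d⟩ := hcon
      have := P1 ⟨v0, a, b, c, d⟩
      omega
    refine ⟨hH, ?_⟩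
    have h2 := P2 hH
    rw [h1] at h2
    by_contra hcc
    have := Nat.one_lt_two_pow_iff.mpr hcc
    omega
  · rintro ⟨hH, hc⟩
    rw [P2 hH, hc, pow_zero]

end Springer
end

section
/- There is exactly one complete N-invariant flag F in V with F_{n−k} = P, namely the standard flag given by F_i = span(p_1,…,p_i) for 0 ≤ i ≤ n−k and F_{n−k+j} = P + span(q_1,…,q_j) for 0 ≤ j ≤ k. -/
open Module

namespace Springer

def predPQ (n k t b : ℕ) (j : Fin n) : Prop :=
  (j.val < t ∧ j.val < n - k) ∨ (n - k ≤ j.val ∧ j.val < n - k + b)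

instance (n k t b : ℕ) : DecidablePred (predPQ n k t b) := by
  unfold predPQ; infer_instance

noncomputable def coordSub (n : ℕ) (P : Fin n → Prop) : Submodule ℂ (Fin n → ℂ) where
  carrier := {x | ∀ j, ¬ P j → x j = 0}
  add_mem' hx hy j hj := by simp [Set.mem_setOf_eq] at *; simp [hx j hj, hy j hj]
  zero_mem' j hj := rfl
  smul_mem' c x hx j hj := by simp [Set.mem_setOf_eq] at *; simp [hx j hj]

lemma mem_coordSub {n : ℕ} {P : Fin n → Prop} {x : Fin n → ℂ} :
    x ∈ coordSub n P ↔ ∀ j, ¬ P j → x j = 0 := Iff.rfl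

lemma coordSub_mono {n : ℕ} {P Q : Fin n → Prop} (h : ∀ j, P j → Q j) :
    coordSub n P ≤ coordSub n Q := fun x hx j hj => hx j (fun hp => hj (h j hp))

lemma spanPQ_eq_coord (n k t b : ℕ) : spanPQ n k t b = coordSub n (predPQ n k t b) := by
  apply le_antisymm
  · rw [spanPQ, Submodule.span_le]
    rintro x ⟨j, hj, rfl⟩ j' hj'
    have hne : j' ≠ j := fun h => hj' (h ▸ hj)
    simp [Pi.single_apply, hne]
  · intro x hx
    have hsum : x = ∑ j, Pi.single j (x j) := (Finset.univ_sum_single x).symm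
    rw [hsum]
    apply Submodule.sum_mem
    intro j _
    by_cases h : predPQ n k t b j
    · have : Pi.single j (x j) = x j • (Pi.single j (1 : ℂ) : Fin n → ℂ) := by
        funext a; simp [Pi.single_apply]
      rw [this]
      exact Submodule.smul_mem _ _ (Submodule.subset_span ⟨j, h, rfl⟩)
    · rw [hx j h]; simp

lemma finrank_spanPQ (n k t b : ℕ) (ht : t ≤ n - k) (hb : n - k + b ≤ n) :
    finrank ℂ (spanPQ n k t b) = t + b := by
  classical
  have hset : {x : Fin n → ℂ | ∃ j : Fin n,
      ((j.val < t ∧ j.val < n - k) ∨ (n - k ≤ j.val ∧ j.val < n - k + b)) ∧ x = Pi.single j 1}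
      = Set.range (fun j : {j : Fin n // predPQ n k t b j} => (Pi.single j.val (1 : ℂ) : Fin n → ℂ)) := by
    ext x
    constructor
    · rintro ⟨j, hj, rfl⟩; exact ⟨⟨j, hj⟩, rfl⟩
    · rintro ⟨⟨j, hj⟩, rfl⟩; exact ⟨j, hj, rfl⟩
  have hli : LinearIndependent ℂ
      (fun j : {j : Fin n // predPQ n k t b j} => (Pi.single j.val (1 : ℂ) : Fin n → ℂ)) := by
    have h := (Pi.basisFun ℂ (Fin n)).linearIndependent
    have h2 := h.comp (Subtype.val : {j : Fin n // predPQ n k t b j} → Fin n)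
      Subtype.val_injective
    simpa [Function.comp_def, Pi.basisFun_apply] using h2
  rw [spanPQ, hset, finrank_span_eq_card hli, Fintype.card_subtype]
  -- card of the filter
  have hcard : (Finset.univ.filter (predPQ n k t b)).card
      = ((Finset.range n).filter
          (fun m => (m < t ∧ m < n - k) ∨ (n - k ≤ m ∧ m < n - k + b))).card := by
    have : (Finset.range n) = (Finset.univ : Finset (Fin n)).map Fin.valEmbedding := by
      rw [Fin.map_valEmbedding_univ]; ext m; simp
    rw [this, Finset.filter_map, Finset.card_map]
    rfl
  have hunion : ((Finset.range n).filter
        (fun m => (m < t ∧ m < n - k) ∨ (n - k ≤ m ∧ m < n - k + b)))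
      = Finset.range t ∪ Finset.Ico (n - k) (n - k + b) := by
    ext m
    simp only [Finset.mem_filter, Finset.mem_range, Finset.mem_union, Finset.mem_Ico]
    omega
  have hdisj : Disjoint (Finset.range t) (Finset.Ico (n - k) (n - k + b)) := by
    rw [Finset.disjoint_left]
    intro m hm hm'
    simp only [Finset.mem_range] at hm
    simp only [Finset.mem_Ico] at hm'
    omega
  rw [hcard, hunion, Finset.card_union_of_disjoint hdisj, Finset.card_range, Nat.card_Ico]
  omega


lemma Nmap_apply (n k : ℕ) (x : Fin n → ℂ) (j : Fin n) :
    Nmap n k x j = if h : j.val + 1 < n ∧ j.val + 1 ≠ n - k then x ⟨j.val + 1, h.1⟩ else 0 := rfl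

lemma map_Nmap_le (n k : ℕ) {P Q : Fin n → Prop}
    (h : ∀ a : Fin n, ∀ ha : a.val + 1 < n, a.val + 1 ≠ n - k → ¬ Q a → ¬ P ⟨a.val + 1, ha⟩) :
    Submodule.map (Nmap n k) (coordSub n P) ≤ coordSub n Q := by
  rintro _ ⟨x, hx, rfl⟩ a ha
  rw [Nmap_apply]
  split_ifs with hc
  · exact hx _ (h a hc.1 hc.2 ha)
  · rfl

lemma comap_Nmap_le (n k j : ℕ) :
    Submodule.comap (Nmap n k) (spanPQ n k (n - k) j) ≤ spanPQ n k (n - k) (j + 1) := by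
  rw [spanPQ_eq_coord, spanPQ_eq_coord]
  intro x hx b hb
  simp only [predPQ, not_or, not_and, not_lt] at hb
  have hb1 : n - k + j + 1 ≤ b.val := by omega
  have hblt := b.isLt
  have ha := hx ⟨b.val - 1, by omega⟩ (by simp only [predPQ, not_or, not_and, not_lt]; omega)
  rw [Nmap_apply, dif_pos (by constructor <;> omega : (b.val - 1) + 1 < n ∧ (b.val-1) + 1 ≠ n - k)] at ha
  have hbe : b = ⟨b.val - 1 + 1, by omega⟩ := Fin.ext (by simp; omega)
  rw [hbe]
  exact ha

lemma le_map_Nmap (n k i : ℕ) (hi : i + 1 ≤ n - k) :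
    spanPQ n k i 0 ≤ Submodule.map (Nmap n k) (spanPQ n k (i + 1) 0) := by
  rw [spanPQ, Submodule.span_le]
  rintro x ⟨j, hj, rfl⟩
  have hjn : j.val < i := by rcases hj with ⟨h, _⟩ | ⟨h1, h2⟩ <;> omega
  have hj1 : j.val + 1 < n := by omega
  refine ⟨Pi.single ⟨j.val + 1, hj1⟩ 1,
    Submodule.subset_span ⟨⟨j.val + 1, hj1⟩, by left; constructor <;> simp <;> omega, rfl⟩, ?_⟩
  funext a
  rw [Nmap_apply]
  split_ifs with hc
  · simp only [Pi.single_apply, Fin.ext_iff]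
    split_ifs <;> first | rfl | omega
  · have : a ≠ j := by
      intro h; apply hc; subst h; exact ⟨by omega, by omega⟩
    simp [Pi.single_apply, this]

lemma spanPQ_congr (n k t b t' b' : ℕ)
    (h : ∀ m : ℕ, m < n → (((m < t ∧ m < n - k) ∨ (n - k ≤ m ∧ m < n - k + b)) ↔
      ((m < t' ∧ m < n - k) ∨ (n - k ≤ m ∧ m < n - k + b')))) :
    spanPQ n k t b = spanPQ n k t' b' := by
  rw [spanPQ_eq_coord, spanPQ_eq_coord]
  apply le_antisymm
  · exact coordSub_mono (fun j hj => (h j.val j.isLt).mp hj)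
  · exact coordSub_mono (fun j hj => (h j.val j.isLt).mpr hj)

lemma stdFlag_isNFlag (n k : ℕ) (hkn : 2 * k ≤ n) : IsNFlag n k (stdFlag n k) := by
  have hk : k ≤ n - k := by omega
  refine ⟨?_, ?_, ?_⟩
  · intro i j hij
    have hij' : i.val ≤ j.val := hij
    unfold stdFlag
    rw [spanPQ_eq_coord, spanPQ_eq_coord]
    exact coordSub_mono (fun a ha => by simp only [predPQ] at *; omega)
  · intro i
    have hi : i.val ≤ n := by omega
    unfold stdFlag
    rw [finrank_spanPQ n k _ _ (by omega) (by omega)]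
    omega
  · intro i
    have hi := i.isLt
    unfold stdFlag
    rw [spanPQ_eq_coord, spanPQ_eq_coord]
    apply map_Nmap_le
    intro a ha hne hQ hP
    simp only [predPQ, Fin.val_succ, Fin.coe_castSucc] at *
    omega

lemma stdFlag_nk (n k : ℕ) (h : n - k < n + 1) :
    stdFlag n k ⟨n - k, h⟩ = Pmod n k := by
  simp only [stdFlag, Pmod, Nat.min_self, Nat.sub_self]


/-- There is exactly one complete `N`-invariant flag `F` with
`F (n - k) = P`, namely the standard flag. -/
theorem unique_flag_through_P (n k : ℕ) (hn : 1 ≤ n) (hkn : 2 * k ≤ n) :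
    (IsNFlag n k (stdFlag n k) ∧ stdFlag n k ⟨n - k, by omega⟩ = Pmod n k) ∧
    ∀ F : Fin (n + 1) → Submodule ℂ (Fin n → ℂ),
      IsNFlag n k F → F ⟨n - k, by omega⟩ = Pmod n k → F = stdFlag n k := by
  refine ⟨⟨stdFlag_isNFlag n k hkn, stdFlag_nk n k (by omega)⟩, ?_⟩
  rintro F ⟨hmono, hdim, hmap⟩ hP
  have hk : k ≤ n - k := by omega
  -- downward claim
  have claimA : ∀ d : ℕ, d ≤ n - k → ∀ h : n - k - d < n + 1,
      F ⟨n - k - d, h⟩ = spanPQ n k (n - k - d) 0 := by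
    intro d
    induction d with
    | zero => intro _ h; simpa [Pmod] using hP
    | succ d ih =>
      intro hd h
      set i := n - k - (d + 1) with hidef
      have hi1 : i + 1 = n - k - d := by omega
      have hF1 : F ⟨i + 1, by omega⟩ = spanPQ n k (i + 1) 0 := by
        have he : (⟨i + 1, by omega⟩ : Fin (n + 1)) = ⟨n - k - d, by omega⟩ :=
          Fin.ext (by simp [hi1])
        rw [he, ih (by omega) (by omega), hi1]
      have hle : spanPQ n k i 0 ≤ F ⟨i, h⟩ := by
        calc spanPQ n k i 0 ≤ Submodule.map (Nmap n k) (spanPQ n k (i + 1) 0) :=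
              le_map_Nmap n k i (by omega)
          _ = Submodule.map (Nmap n k) (F ⟨i + 1, by omega⟩) := by rw [hF1]
          _ ≤ F ⟨i, h⟩ := hmap ⟨i, by omega⟩
      refine (Submodule.eq_of_le_of_finrank_eq hle ?_).symm
      rw [finrank_spanPQ n k i 0 (by omega) (by omega), hdim ⟨i, h⟩]
      simp
  -- upward claim
  have claimB : ∀ j : ℕ, j ≤ k → ∀ h : n - k + j < n + 1,
      F ⟨n - k + j, h⟩ = spanPQ n k (n - k) j := by
    intro j
    induction j with
    | zero => intro _ h; simpa [Pmod] using hP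
    | succ j ih =>
      intro hj h
      have hle : F ⟨n - k + (j + 1), h⟩ ≤ spanPQ n k (n - k) (j + 1) := by
        have h1 : Submodule.map (Nmap n k) (F ⟨n - k + j + 1, by omega⟩)
            ≤ F ⟨n - k + j, by omega⟩ := hmap ⟨n - k + j, by omega⟩
        rw [ih (by omega) (by omega)] at h1
        have h2 := Submodule.map_le_iff_le_comap.mp h1
        have : (⟨n - k + (j + 1), h⟩ : Fin (n + 1)) = ⟨n - k + j + 1, by omega⟩ :=
          Fin.ext (by simp; omega)
        rw [this]
        exact le_trans h2 (comap_Nmap_le n k j)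
      apply Submodule.eq_of_le_of_finrank_eq hle
      rw [finrank_spanPQ n k (n - k) (j + 1) (by omega) (by omega), hdim ⟨n - k + (j + 1), h⟩]
  -- conclude
  funext i
  have hi := i.isLt
  rcases le_or_gt i.val (n - k) with hc | hc
  · have h1 : i = ⟨n - k - (n - k - i.val), by omega⟩ := Fin.ext (by simp; omega)
    rw [h1, claimA (n - k - i.val) (by omega) (by omega)]
    show spanPQ n k (n - k - (n - k - i.val)) 0 = stdFlag n k ⟨n - k - (n - k - i.val), by omega⟩
    unfold stdFlag
    apply spanPQ_congr
    intro m hm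
    simp only [Fin.val_mk]
    omega
  · have h1 : i = ⟨n - k + (i.val - (n - k)), by omega⟩ := Fin.ext (by simp; omega)
    rw [h1, claimB (i.val - (n - k)) (by omega) (by omega)]
    unfold stdFlag
    apply spanPQ_congr
    intro m hm
    simp only [Fin.val_mk]
    omega


end Springer
end
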